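/- A hypergraph H is generated by a bonding grammar BG = (Z, N, T, ⊗) if and only if there exists a bond set for H, i.e., a set B ⊆ E_H of hyperedges such that breaking the bond e for each e ∈ B yields a hypergraph of the form m·Z for some m ∈ ℕ^{|Z|}. -/

import Mathlib

/-! ## Hypergraphs (over a label alphabet `Λ`), bonding, breaking bonds,
bonding grammars, following "Bonding Grammars" (Pshenitsyn). -/

structure LabHypergraph (Λ : Type) where
  V : Finset ℕ
  E : Finset ℕ
  att : ℕ → List ℕ
  lab : ℕ → Λ

namespace LabHypergraph

variable {Λ : Type}

/-- Attachment vertices lie in `V` and attachment lengths agree with types. -/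
def WellFormed (typ : Λ → ℕ) (H : LabHypergraph Λ) : Prop :=
  (∀ e ∈ H.E, ∀ v ∈ H.att e, v ∈ H.V) ∧
  (∀ e ∈ H.E, (H.att e).length = typ (H.lab e))

def Adj (H : LabHypergraph Λ) (u v : ℕ) : Prop :=
  ∃ e ∈ H.E, u ∈ H.att e ∧ v ∈ H.att e

/-- There is a path between `u` and `v` in `H`. -/
def HasPath (H : LabHypergraph Λ) (u v : ℕ) : Prop :=
  Relation.ReflTransGen H.Adj u v

def Connected (H : LabHypergraph Λ) : Prop :=
  ∀ u ∈ H.V, ∀ v ∈ H.V, H.HasPath u v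

/-- The degree of a vertex: the number of pairs `(e, i)` with
`att e ( i ) = v`, i.e. occurrences of `v` in attachment sequences. -/
def degree (H : LabHypergraph Λ) (v : ℕ) : ℕ :=
  ∑ e ∈ H.E, (H.att e).count v

def degreeSet (H : LabHypergraph Λ) : Set ℕ :=
  {d | ∃ v ∈ H.V, H.degree v = d}

def Isomorphic (H G : LabHypergraph Λ) : Prop :=
  ∃ f g : ℕ → ℕ,
    Set.BijOn f ↑H.V ↑G.V ∧ Set.BijOn g ↑H.E ↑G.E ∧
    ∀ e ∈ H.E, G.att (g e) = (H.att e).map f ∧ G.lab (g e) = H.lab e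

end LabHypergraph

/-- A single bonding step: two distinct hyperedges `e₁, e₂` whose labels can be
bonded are merged into a single new hyperedge `e'` with concatenated
attachment sequence and label `lab e₁ ⊗ lab e₂`. -/
def BondingStep {Λ : Type} (bond : Λ → Λ → Option Λ) (H H' : LabHypergraph Λ) : Prop :=
  ∃ e₁ e₂ e' t,
    e₁ ∈ H.E ∧ e₂ ∈ H.E ∧ e₁ ≠ e₂ ∧ e' ∉ H.E ∧
    bond (H.lab e₁) (H.lab e₂) = some t ∧
    H'.V = H.V ∧
    H'.E = (H.E \ {e₁, e₂}) ∪ {e'} ∧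
    (∀ e ∈ H.E \ {e₁, e₂}, H'.att e = H.att e ∧ H'.lab e = H.lab e) ∧
    H'.att e' = H.att e₁ ++ H.att e₂ ∧
    H'.lab e' = t

/-- Breaking the bond `e'` (whose label is `A₁ ⊗ A₂`) of `H'`, introducing the
fresh hyperedges `e₁, e₂`, yields `H`. -/
def BreakBondAt {Λ : Type} (typ : Λ → ℕ) (bond : Λ → Λ → Option Λ)
    (H' H : LabHypergraph Λ) (e' e₁ e₂ : ℕ) : Prop :=
  ∃ A₁ A₂,
    e' ∈ H'.E ∧ e₁ ∉ H'.E ∧ e₂ ∉ H'.E ∧ e₁ ≠ e₂ ∧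
    bond A₁ A₂ = some (H'.lab e') ∧
    H.V = H'.V ∧
    H.E = (H'.E \ {e'}) ∪ {e₁, e₂} ∧
    (∀ e ∈ H'.E \ {e'}, H.att e = H'.att e ∧ H.lab e = H'.lab e) ∧
    H.att e₁ = (H'.att e').take (typ A₁) ∧
    H.att e₂ = (H'.att e').drop (typ A₁) ∧
    H.lab e₁ = A₁ ∧ H.lab e₂ = A₂

def BreakBond {Λ : Type} (typ : Λ → ℕ) (bond : Λ → Λ → Option Λ)
    (H' H : LabHypergraph Λ) : Prop :=
  ∃ e' e₁ e₂, BreakBondAt typ bond H' H e' e₁ e₂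

/-- `BreaksTo typ bond H l F`: starting from `H` and successively breaking the
bonds listed in `l` yields `F`. -/
def BreaksTo {Λ : Type} (typ : Λ → ℕ) (bond : Λ → Λ → Option Λ) :
    LabHypergraph Λ → List ℕ → LabHypergraph Λ → Prop
  | H, [], F => H = F
  | H, e :: l, F => ∃ H₁ e₁ e₂, BreakBondAt typ bond H H₁ e e₁ e₂ ∧ BreaksTo typ bond H₁ l F

/-- `H` is a disjoint union of copies of hypergraphs from `Zs`
(this plays the role of `m · Z`). -/
def IsUnionOfCopies {Λ : Type} (Zs : Set (LabHypergraph Λ)) (H : LabHypergraph Λ) : Prop :=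
  ∃ (n : ℕ) (cV cE : ℕ → ℕ),
    (∀ v ∈ H.V, cV v < n) ∧ (∀ e ∈ H.E, cE e < n) ∧
    (∀ e ∈ H.E, ∀ v ∈ H.att e, v ∈ H.V) ∧
    (∀ e ∈ H.E, ∀ v ∈ H.att e, cV v = cE e) ∧
    ∀ i < n, ∃ Z0 ∈ Zs, LabHypergraph.Isomorphic
      ⟨H.V.filter (fun v => cV v = i), H.E.filter (fun e => cE e = i), H.att, H.lab⟩ Z0

/-- `C` is a connected component of `H`. -/
def IsComponent {Λ : Type} (H C : LabHypergraph Λ) : Prop :=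
  C.V ⊆ H.V ∧ C.att = H.att ∧ C.lab = H.lab ∧ C.V.Nonempty ∧
  (∀ u ∈ C.V, ∀ v ∈ H.V, (H.HasPath u v ↔ v ∈ C.V)) ∧
  ∀ e, e ∈ C.E ↔ (e ∈ H.E ∧ ∃ v ∈ H.att e, v ∈ C.V)

/-- Disjoint union of two hypergraphs (via an even/odd renaming). -/
def hsum {Λ : Type} (H K : LabHypergraph Λ) : LabHypergraph Λ :=
  ⟨H.V.image (fun v => 2 * v) ∪ K.V.image (fun v => 2 * v + 1),
   H.E.image (fun e => 2 * e) ∪ K.E.image (fun e => 2 * e + 1),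
   fun e => if e % 2 = 0 then (H.att (e / 2)).map (fun v => 2 * v)
            else (K.att (e / 2)).map (fun v => 2 * v + 1),
   fun e => if e % 2 = 0 then H.lab (e / 2) else K.lab (e / 2)⟩

/-- A bonding grammar: typed labels, nonterminal and terminal alphabets, a
partial bond function, and a tuple `Z` of start hypergraphs. -/
structure BondingGrammar (Λ : Type) where
  typ : Λ → ℕ
  N : Set Λ
  T : Set Λ
  bond : Λ → Λ → Option Λ
  k : ℕ
  Z : Fin k → LabHypergraph Λ

namespace BondingGrammar

variable {Λ : Type}

/-- Side conditions from the definition of a bonding grammar: `N` and `T` are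
disjoint, the start hypergraphs are connected and well-formed, and the bond
function is a partial injective function `N × N ⇀ T` adding the types. -/
def WellFormed (G : BondingGrammar Λ) : Prop :=
  Disjoint G.N G.T ∧
  (∀ i, (G.Z i).Connected ∧ (G.Z i).WellFormed G.typ) ∧
  (∀ A₁ A₂ t, G.bond A₁ A₂ = some t →
    A₁ ∈ G.N ∧ A₂ ∈ G.N ∧ t ∈ G.T ∧ G.typ t = G.typ A₁ + G.typ A₂) ∧
  (∀ A₁ A₂ B₁ B₂ t, G.bond A₁ A₂ = some t → G.bond B₁ B₂ = some t →
    A₁ = B₁ ∧ A₂ = B₂)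

def ZSet (G : BondingGrammar Λ) : Set (LabHypergraph Λ) :=
  {Z0 | ∃ i, Z0 = G.Z i}

/-- `G` generates `H` if some `m · Z` derives `H` by bonding steps. -/
def Generates (G : BondingGrammar Λ) (H : LabHypergraph Λ) : Prop :=
  ∃ H₀, IsUnionOfCopies G.ZSet H₀ ∧
    Relation.ReflTransGen (BondingStep G.bond) H₀ H

/-- The language of `G`: generated hypergraphs all of whose labels are terminal. -/
def Lang (G : BondingGrammar Λ) : Set (LabHypergraph Λ) :=
  {H | G.Generates H ∧ ∀ e ∈ H.E, H.lab e ∈ G.T}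

end BondingGrammar


section Aux

variable {Λ : Type}

/-- Length well-formedness: attachment lengths agree with label types. -/
def LenWF (typ : Λ → ℕ) (H : LabHypergraph Λ) : Prop :=
  ∀ e ∈ H.E, (H.att e).length = typ (H.lab e)

lemma lenWF_of_union (G : BondingGrammar Λ) (hG : G.WellFormed)
    {H : LabHypergraph Λ} (h : IsUnionOfCopies G.ZSet H) : LenWF G.typ H := by
  intro e he
  obtain ⟨n, cV, cE, hv, hce, _, _, hiso⟩ := h
  obtain ⟨Z0, ⟨i, rfl⟩, f, g, hfb, hgb, hatt⟩ := hiso (cE e) (hce e he)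
  have heC : e ∈ H.E.filter (fun e' => cE e' = cE e) := by
    simp [Finset.mem_filter, he]
  have h1 := hatt e heC
  have hge : g e ∈ (G.Z i).E := by
    have := hgb.1 (by exact_mod_cast heC)
    exact_mod_cast this
  have hwf := ((hG.2.1 i).2).2 (g e) hge
  simp only [h1.1, h1.2] at hwf
  simpa using hwf

/-- A breaking step, reversed, is a bonding step. -/
lemma bond_of_break {G : BondingGrammar Λ} {H' H : LabHypergraph Λ} {e' e₁ e₂ : ℕ}
    (h : BreakBondAt G.typ G.bond H' H e' e₁ e₂) : BondingStep G.bond H H' := by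
  obtain ⟨A₁, A₂, he', he₁, he₂, hne, hbond, hV, hE, hold, hatt1, hatt2, hlab1, hlab2⟩ := h
  have hne1 : e' ≠ e₁ := fun h => he₁ (h ▸ he')
  have hne2 : e' ≠ e₂ := fun h => he₂ (h ▸ he')
  refine ⟨e₁, e₂, e', H'.lab e', ?_, ?_, hne, ?_, ?_, hV.symm, ?_, ?_, ?_, rfl⟩
  · simp [hE]
  · simp [hE]
  · simp only [hE]
    intro hmem
    rcases Finset.mem_union.1 hmem with h1 | h1
    · exact (Finset.mem_sdiff.1 h1).2 (Finset.mem_singleton_self e')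
    · rcases Finset.mem_insert.1 h1 with h2 | h2
      · exact hne1 h2
      · exact hne2 (Finset.mem_singleton.1 h2)
  · rw [hlab1, hlab2]; exact hbond
  · ext x
    simp only [hE, Finset.mem_union, Finset.mem_sdiff, Finset.mem_insert,
      Finset.mem_singleton]
    by_cases hx1 : x = e₁ <;> by_cases hx2 : x = e₂ <;> by_cases hx' : x = e'
    all_goals subst_vars
    all_goals simp_all
  · intro e he
    have he2 : e ∈ H'.E \ {e'} := by
      have h1 := Finset.mem_sdiff.1 he
      have h2 := h1.1
      rw [hE] at h2
      rcases Finset.mem_union.1 h2 with h3 | h3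
      · exact h3
      · exfalso
        rcases Finset.mem_insert.1 h3 with h4 | h4
        · exact h1.2 (by simp [h4])
        · exact h1.2 (by simp [Finset.mem_singleton.1 h4])
    exact ⟨(hold e he2).1.symm, (hold e he2).2.symm⟩
  · rw [hatt1, hatt2, List.take_append_drop]

lemma breaksTo_rtg {G : BondingGrammar Λ} :
    ∀ (l : List ℕ) (H F : LabHypergraph Λ), BreaksTo G.typ G.bond H l F →
      Relation.ReflTransGen (BondingStep G.bond) F H := by
  intro l
  induction l with
  | nil => intro H F h; rw [h]
  | cons e l ih =>
    intro H F h
    obtain ⟨H₁, e₁, e₂, hb, hrest⟩ := h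
    exact (ih H₁ F hrest).tail (bond_of_break hb)

/-- A bonding step, reversed, is a breaking step (needs length well-formedness). -/
lemma break_of_bond (G : BondingGrammar Λ) (hG : G.WellFormed)
    {b c : LabHypergraph Λ} (hlen : LenWF G.typ b) (h : BondingStep G.bond b c) :
    ∃ e' e₁ e₂, BreakBondAt G.typ G.bond c b e' e₁ e₂ ∧
      e' ∉ b.E ∧ e₁ ∈ b.E ∧ e₂ ∈ b.E ∧ c.lab e' ∈ G.T ∧
      b.lab e₁ ∈ G.N ∧ b.lab e₂ ∈ G.N ∧
      c.E = (b.E \ {e₁, e₂}) ∪ {e'} ∧ LenWF G.typ c ∧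
      (∀ e ∈ b.E \ ({e₁, e₂} : Finset ℕ), c.lab e = b.lab e ∧ e ∈ c.E) := by
  obtain ⟨e₁, e₂, e', t, he₁, he₂, hne, he', hbond, hV, hE, hold, hatt, hlab⟩ := h
  have hbN := hG.2.2.1 _ _ _ hbond
  have hne1 : e₁ ≠ e' := fun h => he' (h ▸ he₁)
  have hne2 : e₂ ≠ e' := fun h => he' (h ▸ he₂)
  have hmem : ∀ e ∈ b.E \ ({e₁, e₂} : Finset ℕ), e ∈ c.E := by
    intro e he; rw [hE]; exact Finset.mem_union_left _ he
  have hce' : e' ∈ c.E := by rw [hE]; simp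
  have hlenc : LenWF G.typ c := by
    intro e he
    rw [hE] at he
    rcases Finset.mem_union.1 he with h1 | h1
    · rw [(hold e h1).1, (hold e h1).2]
      exact hlen e (Finset.mem_sdiff.1 h1).1
    · have : e = e' := Finset.mem_singleton.1 h1
      subst this
      rw [hatt, hlab, List.length_append, hlen e₁ he₁, hlen e₂ he₂, hbN.2.2.2]
  refine ⟨e', e₁, e₂, ⟨b.lab e₁, b.lab e₂, hce', ?_, ?_, hne, ?_, hV.symm, ?_, ?_, ?_, ?_, rfl, rfl⟩,
    he', he₁, he₂, ?_, hbN.1, hbN.2.1, hE, hlenc, fun e he => ⟨(hold e he).2, hmem e he⟩⟩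
  · rw [hE]
    intro hmem'
    rcases Finset.mem_union.1 hmem' with h1 | h1
    · exact (Finset.mem_sdiff.1 h1).2 (by simp)
    · exact hne1 (Finset.mem_singleton.1 h1)
  · rw [hE]
    intro hmem'
    rcases Finset.mem_union.1 hmem' with h1 | h1
    · exact (Finset.mem_sdiff.1 h1).2 (by simp)
    · exact hne2 (Finset.mem_singleton.1 h1)
  · rw [hlab]; exact hbond
  · ext x
    simp only [hE, Finset.mem_union, Finset.mem_sdiff, Finset.mem_insert,
      Finset.mem_singleton]
    by_cases hx1 : x = e₁ <;> by_cases hx2 : x = e₂ <;> by_cases hx' : x = e'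
    all_goals subst_vars
    all_goals simp_all
  · intro e he
    have he2 : e ∈ b.E \ ({e₁, e₂} : Finset ℕ) := by
      have h1 := Finset.mem_sdiff.1 he
      have h2 := h1.1
      rw [hE] at h2
      rcases Finset.mem_union.1 h2 with h3 | h3
      · exact h3
      · exact (h1.2 h3).elim
    exact ⟨(hold e he2).1.symm, (hold e he2).2.symm⟩
  · rw [hatt, ← hlen e₁ he₁, List.take_left]
  · rw [hatt, ← hlen e₁ he₁, List.drop_left]
  · rw [hlab]; exact (hG.2.2.1 _ _ _ hbond).2.2.1

end Aux

/-- a hypergraph `H` is generated by a bonding grammar iff there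
is a bond set for `H`: a set of hyperedges of `H` (here listed without
repetition) such that breaking all these bonds yields a hypergraph of the
form `m · Z`. -/
theorem generates_iff_bond_set {Λ : Type}
    (G : BondingGrammar Λ) (hG : G.WellFormed) (H : LabHypergraph Λ) :
    G.Generates H ↔
      ∃ l : List ℕ, l.Nodup ∧ (∀ e ∈ l, e ∈ H.E) ∧
        ∃ F, BreaksTo G.typ G.bond H l F ∧ IsUnionOfCopies G.ZSet F := by
  constructor
  · rintro ⟨H₀, hU, hrtg⟩
    suffices hsuff : LenWF G.typ H ∧ ∃ l : List ℕ, l.Nodup ∧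
        (∀ e ∈ l, e ∈ H.E ∧ H.lab e ∈ G.T) ∧
        ∃ F, BreaksTo G.typ G.bond H l F ∧ IsUnionOfCopies G.ZSet F by
      obtain ⟨_, l, hnd, hmem, F, hbr, hF⟩ := hsuff
      exact ⟨l, hnd, fun e he => (hmem e he).1, F, hbr, hF⟩
    induction hrtg with
    | refl => exact ⟨lenWF_of_union G hG hU, [], List.nodup_nil, by simp, H₀, rfl, hU⟩
    | @tail b c hab hbc ih =>
      obtain ⟨hlenb, l, hnd, hmem, F, hbr, hF⟩ := ih
      obtain ⟨e', e₁, e₂, hbreak, he'b, he₁b, he₂b, hlabT, hN1, hN2, hE, hlenc, hkeep⟩ :=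
        break_of_bond G hG hlenb hbc
      have hdisj := hG.1
      refine ⟨hlenc, e' :: l, ?_, ?_, F, ⟨b, e₁, e₂, hbreak, hbr⟩, hF⟩
      · refine List.nodup_cons.2 ⟨fun h => he'b (hmem e' h).1, hnd⟩
      · intro e he
        rcases List.mem_cons.1 he with rfl | he
        · exact ⟨by rw [hE]; simp, hlabT⟩
        · have h1 := hmem e he
          have hne1 : e ≠ e₁ := by
            rintro rfl; exact (hdisj.le_bot ⟨hN1, h1.2⟩ : _)
          have hne2 : e ≠ e₂ := by
            rintro rfl; exact (hdisj.le_bot ⟨hN2, h1.2⟩ : _)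
          have hmem' : e ∈ b.E \ ({e₁, e₂} : Finset ℕ) := by
            simp [Finset.mem_sdiff, h1.1, hne1, hne2]
          obtain ⟨hlabeq, hce⟩ := hkeep e hmem'
          exact ⟨hce, hlabeq ▸ h1.2⟩
  · rintro ⟨l, hnd, hmem, F, hbr, hF⟩
    exact ⟨F, hF, breaksTo_rtg l H F hbr⟩
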